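/- Let m ≥ 2 and let n ≥ 2m be even. Then W(G^4_{(n−2m)/2, (n−2m)/2, 2m−4}) − W(G^3_{n−2m, 2m−3}) = 4 + n + 2m³ + nm + (1/2)mn² − (1/2)n² − 4m − 2nm²; equivalently, writing n = 2m+k with k ≥ 0 even, this difference equals 2 + (1/2)(k²−2k−4)(m−1). In particular the difference is ≤ 0 for k ∈ {0,2} (with equality if and only if m = 2) and strictly positive for k ≥ 4. -/

import Mathlib

open SimpleGraph Finset
set_option maxHeartbeats 4000000
set_option linter.unreachableTactic false
set_option linter.unnecessarySeqFocus false
set_option linter.unusedTactic false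

/-- The Wiener index of a graph: the sum of distances over all unordered pairs
of distinct vertices (computed as half the sum over ordered pairs). -/
noncomputable def wienerIndex {V : Type*} [Fintype V] (G : SimpleGraph V) : ℕ :=
  (∑ u : V, ∑ v : V, G.dist u v) / 2

/-- The matching number of a graph: maximum number of edges of a matching. -/
noncomputable def matchingNumber {V : Type*} [Fintype V] (G : SimpleGraph V) : ℕ :=
  sSup {k : ℕ | ∃ M : G.Subgraph, M.IsMatching ∧ M.edgeSet.ncard = k}

/-- A graph is unicyclic if it is connected and has as many edges as vertices. -/
def IsUnicyclic {V : Type*} [Fintype V] (G : SimpleGraph V) : Prop :=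
  G.Connected ∧ G.edgeSet.ncard = Fintype.card V

/-- `G3Graph a j` : a triangle on vertices `0,1,2`, a path with `j` edges attached to
vertex `2` (vertices `2,3,…,j+2`), and `a` pendant vertices attached to vertex `j+2`. -/
def G3Graph (a j : ℕ) : SimpleGraph (Fin (a + j + 3)) :=
  SimpleGraph.fromRel (fun u v =>
    (u.val = 0 ∧ v.val = 1) ∨ (u.val = 0 ∧ v.val = 2) ∨ (u.val = 1 ∧ v.val = 2) ∨
    (2 ≤ u.val ∧ u.val ≤ j + 1 ∧ v.val = u.val + 1) ∨
    (u.val = j + 2 ∧ j + 3 ≤ v.val))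

/-- `G3Graph4 a b c j` : a triangle on vertices `0,1,2`, a path with `j` edges attached to
vertex `2` ending in a star with `a` leaves, `b` pendant vertices attached to vertex `0`,
and `c` pendant vertices attached to vertex `1`. -/
def G3Graph4 (a b c j : ℕ) : SimpleGraph (Fin (a + b + c + j + 3)) :=
  SimpleGraph.fromRel (fun u v =>
    (u.val = 0 ∧ v.val = 1) ∨ (u.val = 0 ∧ v.val = 2) ∨ (u.val = 1 ∧ v.val = 2) ∨
    (2 ≤ u.val ∧ u.val ≤ j + 1 ∧ v.val = u.val + 1) ∨
    (u.val = j + 2 ∧ j + 3 ≤ v.val ∧ v.val < j + 3 + a) ∨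
    (u.val = 0 ∧ j + 3 + a ≤ v.val ∧ v.val < j + 3 + a + b) ∨
    (u.val = 1 ∧ j + 3 + a + b ≤ v.val))

/-- `G4Graph a c j` : a 4-cycle on vertices `0,1,2,3`, a path with `j` edges attached to
vertex `3` (vertices `3,4,…,j+3`), `a` pendant vertices attached to the far endpoint `j+3`
of the path, and `c` pendant vertices attached to vertex `1` (opposite to `3`). -/
def G4Graph (a c j : ℕ) : SimpleGraph (Fin (a + c + j + 4)) :=
  SimpleGraph.fromRel (fun u v =>
    (u.val = 0 ∧ v.val = 1) ∨ (u.val = 1 ∧ v.val = 2) ∨ (u.val = 2 ∧ v.val = 3) ∨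
    (u.val = 0 ∧ v.val = 3) ∨
    (3 ≤ u.val ∧ u.val ≤ j + 2 ∧ v.val = u.val + 1) ∨
    (u.val = j + 3 ∧ j + 4 ≤ v.val ∧ v.val < j + 4 + a) ∨
    (u.val = 1 ∧ j + 4 + a ≤ v.val))


lemma dist_eq_of_aux {V : Type*} (G : SimpleGraph V) (d : V → V → ℕ)
    (h0 : ∀ u, d u u = 0)
    (hpos : ∀ u v, d u v = 0 → u = v)
    (hlip : ∀ u x v, G.Adj u x → d u v ≤ d x v + 1)
    (hdesc : ∀ u v, u ≠ v → ∃ x, G.Adj u x ∧ d x v < d u v) :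
    ∀ u v, G.dist u v = d u v := by
  have key : ∀ n u v, d u v ≤ n → G.Reachable u v ∧ G.dist u v ≤ d u v := by
    intro n
    induction n with
    | zero =>
      intro u v h
      have heq := hpos u v (Nat.le_zero.mp h)
      subst heq
      exact ⟨Reachable.refl u, by rw [SimpleGraph.dist_self, h0]⟩
    | succ n ih =>
      intro u v h
      by_cases huv : u = v
      · subst huv; exact ⟨Reachable.refl u, by rw [SimpleGraph.dist_self]; omega⟩
      · obtain ⟨x, hadj, hlt⟩ := hdesc u v huv
        have hx := ih x v (by omega)
        refine ⟨hadj.reachable.trans hx.1, ?_⟩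
        obtain ⟨p, hp⟩ := hx.1.exists_walk_length_eq_dist
        have h2 := SimpleGraph.dist_le (SimpleGraph.Walk.cons hadj p)
        simp only [SimpleGraph.Walk.length_cons] at h2
        omega
  have lower : ∀ u v (p : G.Walk u v), d u v ≤ p.length := by
    intro u v p
    induction p with
    | nil => simp [h0]
    | @cons u x v h q ih =>
      have := hlip u x v h
      simp only [SimpleGraph.Walk.length_cons]
      omega
  intro u v
  obtain ⟨hr, hub⟩ := key (d u v) u v le_rfl
  obtain ⟨p, hp⟩ := hr.exists_walk_length_eq_dist
  have := lower u v p
  omega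


lemma sum_sym (f : ℕ → ℕ → ℕ) (hs : ∀ u v, f u v = f v u) (hd : ∀ u, f u u = 0) :
    ∀ N, ∑ u ∈ range N, ∑ v ∈ range N, f u v
      = 2 * ∑ u ∈ range N, ∑ v ∈ range u, f u v := by
  intro N
  induction N with
  | zero => simp
  | succ N ih =>
    rw [Finset.sum_range_succ (f := fun u => ∑ v ∈ range (N+1), f u v)]
    have hrow : ∀ u ∈ range N, ∑ v ∈ range (N+1), f u v
        = ∑ v ∈ range N, f u v + f N u := by
      intro u hu; rw [Finset.sum_range_succ, hs u N]
    rw [Finset.sum_congr rfl hrow, Finset.sum_add_distrib,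
      Finset.sum_range_succ (f := fun v => f N v), hd, add_zero,
      Finset.sum_range_succ (f := fun u => ∑ v ∈ range u, f u v)]
    omega

lemma wiener_eq {N : ℕ} (G : SimpleGraph (Fin N)) (f : ℕ → ℕ → ℕ)
    (hdist : ∀ u v : Fin N, G.dist u v = f u.val v.val)
    (hs : ∀ u v, f u v = f v u) (hd : ∀ u, f u u = 0) :
    2 * wienerIndex G = ∑ u ∈ range N, ∑ v ∈ range N, f u v := by
  unfold wienerIndex
  have h1 : (∑ u : Fin N, ∑ v : Fin N, G.dist u v)
      = ∑ u ∈ range N, ∑ v ∈ range N, f u v := by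
    calc (∑ u : Fin N, ∑ v : Fin N, G.dist u v)
        = ∑ u : Fin N, ∑ v : Fin N, f u.val v.val := by
          refine Finset.sum_congr rfl (fun u _ => ?_)
          exact Finset.sum_congr rfl (fun v _ => hdist u v)
      _ = ∑ u : Fin N, ∑ v ∈ range N, f u.val v := by
          refine Finset.sum_congr rfl (fun u _ => ?_)
          exact Fin.sum_univ_eq_sum_range (fun x => f u.val x) N
      _ = ∑ u ∈ range N, ∑ v ∈ range N, f u v :=
          Fin.sum_univ_eq_sum_range (fun x => ∑ v ∈ range N, f x v) N
  rw [h1, sum_sym f hs hd N, Nat.mul_div_cancel_left _ two_pos]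

def d3 (j u v : ℕ) : ℕ :=
  if u = v then 0
  else if u ≤ 1 then (if v ≤ 1 then 1 else if v ≤ j+2 then v-1 else j+2)
  else if u ≤ j+2 then (if v ≤ 1 then u-1 else if v ≤ j+2 then (u-v)+(v-u) else j+3-u)
  else (if v ≤ 1 then j+2 else if v ≤ j+2 then j+3-v else 2)

def choose3 (j u v : ℕ) : ℕ :=
  if u ≤ 1 then (if v ≤ 1 then v else 2)
  else if u ≤ j+2 then
    (if u = 2 ∧ v ≤ 1 then v
     else if v < u then u-1
     else if v ≤ j+2 then u+1
     else if u = j+2 then v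
     else u+1)
  else j+2

lemma d3_self (j u : ℕ) : d3 j u u = 0 := by simp [d3]

lemma d3_pos (j u v : ℕ) (h : d3 j u v = 0) : u = v := by
  by_contra hne
  simp only [d3] at h
  split_ifs at h <;> omega

lemma d3_symm (j u v : ℕ) : d3 j u v = d3 j v u := by
  simp only [d3]; split_ifs <;> omega

lemma G3_lip (a j : ℕ) (u x v : Fin (a+j+3)) (h : (G3Graph a j).Adj u x) :
    d3 j u.val v.val ≤ d3 j x.val v.val + 1 := by
  rw [G3Graph, SimpleGraph.fromRel_adj] at h
  obtain ⟨hne, hrel⟩ := h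
  have hne' : u.val ≠ x.val := fun hh => hne (Fin.ext hh)
  rcases hrel with (h|h|h|h|h)|(h|h|h|h|h) <;>
    (simp only [d3]; split_ifs <;> omega)

lemma G3_adj (a j : ℕ) (u x : Fin (a+j+3)) (hne : u.val ≠ x.val)
    (hrel : ((u.val = 0 ∧ x.val = 1) ∨ (u.val = 0 ∧ x.val = 2) ∨ (u.val = 1 ∧ x.val = 2) ∨
      (2 ≤ u.val ∧ u.val ≤ j + 1 ∧ x.val = u.val + 1) ∨ (u.val = j + 2 ∧ j + 3 ≤ x.val)) ∨
      ((x.val = 0 ∧ u.val = 1) ∨ (x.val = 0 ∧ u.val = 2) ∨ (x.val = 1 ∧ u.val = 2) ∨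
      (2 ≤ x.val ∧ x.val ≤ j + 1 ∧ u.val = x.val + 1) ∨ (x.val = j + 2 ∧ j + 3 ≤ u.val))) :
    (G3Graph a j).Adj u x := by
  rw [G3Graph, SimpleGraph.fromRel_adj]
  exact ⟨fun h => hne (congrArg Fin.val h), hrel⟩

lemma G3_desc (a j : ℕ) (u v : Fin (a+j+3)) (hne : u ≠ v) :
    ∃ x : Fin (a+j+3), (G3Graph a j).Adj u x ∧ d3 j x.val v.val < d3 j u.val v.val := by
  have hne' : u.val ≠ v.val := fun hh => hne (Fin.ext hh)
  have hu := u.isLt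
  have hv := v.isLt
  rcases le_or_gt u.val 1 with hc | hc
  · -- u in {0,1}
    rcases le_or_gt v.val 1 with hc2 | hc2
    · exact ⟨v, G3_adj a j u v hne' (by omega),
        by simp only [d3]; split_ifs <;> omega⟩
    · exact ⟨⟨2, by omega⟩, G3_adj a j u ⟨2, by omega⟩ (by simp +decide <;> omega) (by simp only [Fin.val_mk, and_true, true_and, and_false, false_and, or_false, false_or] <;> omega),
        by simp only [d3]; split_ifs <;> omega⟩
  rcases le_or_gt u.val (j+2) with hc3 | hc3
  · -- u on path
    rcases le_or_gt v.val 1 with hc2 | hc2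
    · rcases eq_or_lt_of_le (Nat.succ_le_of_lt hc) with h2 | h2
      · exact ⟨v, G3_adj a j u v hne' (by omega),
          by simp only [d3]; split_ifs <;> omega⟩
      · exact ⟨⟨u.val-1, by omega⟩, G3_adj a j u _ (by simp +decide <;> omega) (by simp +decide <;> omega),
          by simp only [d3]; split_ifs <;> omega⟩
    rcases lt_or_ge v.val u.val with hc4 | hc4
    · exact ⟨⟨u.val-1, by omega⟩, G3_adj a j u _ (by simp +decide <;> omega) (by simp +decide <;> omega),
        by simp only [d3]; split_ifs <;> omega⟩
    rcases le_or_gt v.val (j+2) with hc5 | hc5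
    · exact ⟨⟨u.val+1, by omega⟩, G3_adj a j u _ (by simp +decide <;> omega) (by simp +decide <;> omega),
        by simp only [d3]; split_ifs <;> omega⟩
    rcases eq_or_lt_of_le hc3 with h2 | h2
    · exact ⟨v, G3_adj a j u v hne' (by omega),
        by simp only [d3]; split_ifs <;> omega⟩
    · exact ⟨⟨u.val+1, by omega⟩, G3_adj a j u _ (by simp +decide <;> omega) (by simp +decide <;> omega),
        by simp only [d3]; split_ifs <;> omega⟩
  · -- u leaf
    exact ⟨⟨j+2, by omega⟩, G3_adj a j u _ (by simp +decide <;> omega) (by simp +decide <;> omega),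
      by simp only [d3]; split_ifs <;> omega⟩

def B3 (j a : ℕ) : ℕ := ∑ v ∈ range (a+j+3), d3 j (a+j+3) v
def T3S (a j : ℕ) : ℕ := ∑ u ∈ range (a+j+3), ∑ v ∈ range (a+j+3), d3 j u v

lemma B3_succ (j a : ℕ) : B3 j (a+1) = B3 j a + 2 := by
  unfold B3
  rw [show a+1+j+3 = (a+j+3)+1 by omega, Finset.sum_range_succ]
  have h1 : ∀ v ∈ range (a+j+3), d3 j ((a+j+3)+1) v = d3 j (a+j+3) v := by
    intro v hv; rw [mem_range] at hv
    simp only [d3]; split_ifs <;> omega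
  have h2 : d3 j ((a+j+3)+1) (a+j+3) = 2 := by
    simp only [d3]; split_ifs <;> omega
  rw [Finset.sum_congr rfl h1, h2]

lemma B3_base (j : ℕ) : 2 * B3 j 0 = j^2+7*j+10 := by
  induction j with
  | zero => decide
  | succ j ih =>
    have recur : B3 (j+1) 0 = B3 j 0 + (j+4) := by
      unfold B3
      rw [show 0+(j+1)+3 = (0+j+3)+1 by omega, Finset.sum_range_succ]
      have h1 : ∀ v ∈ range (0+j+3), d3 (j+1) ((0+j+3)+1) v = d3 j (0+j+3) v + 1 := by
        intro v hv; rw [mem_range] at hv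
        simp only [d3]; split_ifs <;> omega
      rw [Finset.sum_congr rfl h1, Finset.sum_add_distrib, Finset.sum_const, card_range,
        smul_eq_mul, mul_one]
      have h2 : d3 (j+1) ((0+j+3)+1) (0+j+3) = 1 := by
        simp only [d3]; split_ifs <;> omega
      omega
    linarith

lemma B3_val (j a : ℕ) : 2 * B3 j a = j^2+7*j+10+4*a := by
  induction a with
  | zero => simpa using B3_base j
  | succ a ih => have h := B3_succ j a; linarith

lemma C3_rec (j : ℕ) : T3S 0 (j+1) = T3S 0 j + 2 * B3 j 0 := by
  unfold T3S B3
  rw [show 0+(j+1)+3 = (0+j+3)+1 by omega, Finset.sum_range_succ]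
  have hrow : ∀ u ∈ range (0+j+3), ∑ v ∈ range ((0+j+3)+1), d3 (j+1) u v
      = (∑ v ∈ range (0+j+3), d3 j u v) + d3 j (0+j+3) u := by
    intro u hu; rw [mem_range] at hu
    rw [Finset.sum_range_succ]
    congr 1
    · refine Finset.sum_congr rfl (fun v hv => ?_)
      rw [mem_range] at hv
      simp only [d3]; split_ifs <;> omega
    · simp only [d3]; split_ifs <;> omega
  rw [Finset.sum_congr rfl hrow, Finset.sum_add_distrib]
  have hlast : ∑ v ∈ range ((0+j+3)+1), d3 (j+1) (0+j+3) v
      = ∑ v ∈ range (0+j+3), d3 j (0+j+3) v := by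
    rw [Finset.sum_range_succ]
    have h0 : d3 (j+1) (0+j+3) (0+j+3) = 0 := d3_self _ _
    rw [h0, add_zero]
    refine Finset.sum_congr rfl (fun v hv => ?_)
    rw [mem_range] at hv
    simp only [d3]; split_ifs <;> omega
  rw [hlast]
  omega

lemma C3_val (j : ℕ) : 3 * T3S 0 j = j^3+9*j^2+20*j+18 := by
  induction j with
  | zero => decide
  | succ j ih =>
    have h1 := C3_rec j
    have h2 := B3_base j
    linarith

lemma T3_succ (a j : ℕ) : T3S (a+1) j = T3S a j + 2 * B3 j a := by
  unfold T3S B3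
  rw [show a+1+j+3 = (a+j+3)+1 by omega, Finset.sum_range_succ]
  have hrow : ∀ u ∈ range (a+j+3), ∑ v ∈ range ((a+j+3)+1), d3 j u v
      = (∑ v ∈ range (a+j+3), d3 j u v) + d3 j (a+j+3) u := by
    intro u hu
    rw [Finset.sum_range_succ, d3_symm j u (a+j+3)]
  have hlast : ∑ v ∈ range ((a+j+3)+1), d3 j (a+j+3) v
      = ∑ v ∈ range (a+j+3), d3 j (a+j+3) v := by
    rw [Finset.sum_range_succ, d3_self, add_zero]
  rw [Finset.sum_congr rfl hrow, Finset.sum_add_distrib, hlast]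
  omega

lemma T3_val (a j : ℕ) : 3 * T3S a j
    = 18+20*j+9*j^2+j^3+24*a+21*a*j+3*a*j^2+6*a^2 := by
  induction a with
  | zero => have := C3_val j; linarith
  | succ a ih =>
    have h1 := T3_succ a j
    have h2 := B3_val j a
    linarith

def row1 (j a v : ℕ) : ℕ :=
  if v ≤ 2 then 1 else if v ≤ j+3 then v-1 else if v < j+4+a then j+3 else 1
def rowE (j a v : ℕ) : ℕ :=
  if v = 1 then 1 else if v ≤ 2 then 2 else if v ≤ j+3 then v-2 else if v < j+4+a then j+2 else 2
def rowP (j a u v : ℕ) : ℕ :=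
  if v = 1 then u-1 else if v ≤ 2 then u-2 else if v ≤ j+3 then (u-v)+(v-u)
  else if v < j+4+a then j+4-u else u
def rowA (j a v : ℕ) : ℕ :=
  if v = 1 then j+3 else if v ≤ 2 then j+2 else if v ≤ j+3 then j+4-v
  else if v < j+4+a then 2 else j+4
def rowC (j a v : ℕ) : ℕ :=
  if v = 1 then 1 else if v ≤ 2 then 2 else if v ≤ j+3 then v else if v < j+4+a then j+4 else 2

def d4 (j a u v : ℕ) : ℕ :=
  if u = v then 0 else
  if u = 1 then row1 j a v
  else if u ≤ 2 then rowE j a v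
  else if u ≤ j+3 then rowP j a u v
  else if u < j+4+a then rowA j a v
  else rowC j a v

lemma d4_self (j a u : ℕ) : d4 j a u u = 0 := by simp [d4]

lemma d4_pos (j a u v : ℕ) (h : d4 j a u v = 0) : u = v := by
  by_contra hne
  simp only [d4, row1, rowE, rowP, rowA, rowC] at h
  split_ifs at h <;> omega

lemma d4_symm (j a u v : ℕ) : d4 j a u v = d4 j a v u := by
  simp only [d4]
  split_ifs <;> (try simp only [row1, rowE, rowP, rowA, rowC]) <;> (try split_ifs) <;> omega

lemma G4_lip (a c j : ℕ) (u x v : Fin (a+c+j+4)) (h : (G4Graph a c j).Adj u x) :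
    d4 j a u.val v.val ≤ d4 j a x.val v.val + 1 := by
  rw [G4Graph, SimpleGraph.fromRel_adj] at h
  obtain ⟨hne, hrel⟩ := h
  have hne' : u.val ≠ x.val := fun hh => hne (Fin.ext hh)
  simp only [d4]
  split_ifs <;> (try simp only [row1, rowE, rowP, rowA, rowC]) <;> (try split_ifs) <;> omega

lemma G4_adj (a c j : ℕ) (u x : Fin (a+c+j+4)) (hne : u.val ≠ x.val)
    (hrel : ((u.val = 0 ∧ x.val = 1) ∨ (u.val = 1 ∧ x.val = 2) ∨ (u.val = 2 ∧ x.val = 3) ∨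
      (u.val = 0 ∧ x.val = 3) ∨
      (3 ≤ u.val ∧ u.val ≤ j + 2 ∧ x.val = u.val + 1) ∨
      (u.val = j + 3 ∧ j + 4 ≤ x.val ∧ x.val < j + 4 + a) ∨
      (u.val = 1 ∧ j + 4 + a ≤ x.val)) ∨
      ((x.val = 0 ∧ u.val = 1) ∨ (x.val = 1 ∧ u.val = 2) ∨ (x.val = 2 ∧ u.val = 3) ∨
      (x.val = 0 ∧ u.val = 3) ∨
      (3 ≤ x.val ∧ x.val ≤ j + 2 ∧ u.val = x.val + 1) ∨
      (x.val = j + 3 ∧ j + 4 ≤ u.val ∧ u.val < j + 4 + a) ∨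
      (x.val = 1 ∧ j + 4 + a ≤ u.val))) :
    (G4Graph a c j).Adj u x := by
  rw [G4Graph, SimpleGraph.fromRel_adj]
  exact ⟨fun h => hne (congrArg Fin.val h), hrel⟩

lemma G4_desc (a c j : ℕ) (u v : Fin (a+c+j+4)) (hne : u ≠ v) :
    ∃ x : Fin (a+c+j+4), (G4Graph a c j).Adj u x ∧ d4 j a x.val v.val < d4 j a u.val v.val := by
  have hne' : u.val ≠ v.val := fun hh => hne (Fin.ext hh)
  have hu := u.isLt
  have hv := v.isLt
  by_cases hc1 : u.val = 1
  · by_cases hv0 : v.val = 0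
    · refine ⟨⟨0, by omega⟩, G4_adj a c j u _ (by simp only [ne_eq, Fin.val_mk] <;> omega) (by simp <;> omega), ?_⟩
      simp only [d4]
      split_ifs <;> (try simp only [row1, rowE, rowP, rowA, rowC]) <;> (try split_ifs) <;> omega
    by_cases hvc : j+4+a ≤ v.val
    · refine ⟨v, G4_adj a c j u v hne' (by omega), ?_⟩
      simp only [d4]
      split_ifs <;> (try simp only [row1, rowE, rowP, rowA, rowC]) <;> (try split_ifs) <;> omega
    · refine ⟨⟨2, by omega⟩, G4_adj a c j u _ (by simp <;> omega) (by simp <;> omega), ?_⟩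
      simp only [d4]
      split_ifs <;> (try simp only [row1, rowE, rowP, rowA, rowC]) <;> (try split_ifs) <;> omega
  by_cases hc0 : u.val ≤ 2
  · -- u = 0 or u = 2
    by_cases hv1 : v.val = 1 ∨ j+4+a ≤ v.val
    · refine ⟨⟨1, by omega⟩, G4_adj a c j u _ (by simp <;> omega) (by simp only [Fin.val_mk, and_true, true_and, and_false, false_and, or_false, false_or] <;> omega), ?_⟩
      simp only [d4]
      split_ifs <;> (try simp only [row1, rowE, rowP, rowA, rowC]) <;> (try split_ifs) <;> omega
    · refine ⟨⟨3, by omega⟩, G4_adj a c j u _ (by simp <;> omega) (by simp only [Fin.val_mk, and_true, true_and, and_false, false_and, or_false, false_or] <;> omega), ?_⟩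
      simp only [d4]
      split_ifs <;> (try simp only [row1, rowE, rowP, rowA, rowC]) <;> (try split_ifs) <;> omega
  by_cases hcp : u.val ≤ j+3
  · -- u on path, 3 ≤ u.val
    by_cases h3 : u.val = 3 ∧ v.val ≤ 2
    · by_cases hv1 : v.val = 1
      · refine ⟨⟨2, by omega⟩, G4_adj a c j u _ (by simp <;> omega) (by simp <;> omega), ?_⟩
        simp only [d4]
        split_ifs <;> (try simp only [row1, rowE, rowP, rowA, rowC]) <;> (try split_ifs) <;> omega
      · refine ⟨v, G4_adj a c j u v hne' (by omega), ?_⟩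
        simp only [d4]
        split_ifs <;> (try simp only [row1, rowE, rowP, rowA, rowC]) <;> (try split_ifs) <;> omega
    by_cases hdown : v.val ≤ 2 ∨ (v.val < u.val ∧ v.val ≤ j+3) ∨ j+4+a ≤ v.val
    · refine ⟨⟨u.val-1, by omega⟩, G4_adj a c j u _ (by simp <;> omega) (by simp <;> omega), ?_⟩
      simp only [d4]
      split_ifs <;> (try simp only [row1, rowE, rowP, rowA, rowC]) <;> (try split_ifs) <;> omega
    by_cases hup : v.val ≤ j+3
    · refine ⟨⟨u.val+1, by omega⟩, G4_adj a c j u _ (by simp <;> omega) (by simp <;> omega), ?_⟩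
      simp only [d4]
      split_ifs <;> (try simp only [row1, rowE, rowP, rowA, rowC]) <;> (try split_ifs) <;> omega
    by_cases hend : u.val = j+3
    · refine ⟨v, G4_adj a c j u v hne' (by omega), ?_⟩
      simp only [d4]
      split_ifs <;> (try simp only [row1, rowE, rowP, rowA, rowC]) <;> (try split_ifs) <;> omega
    · refine ⟨⟨u.val+1, by omega⟩, G4_adj a c j u _ (by simp <;> omega) (by simp <;> omega), ?_⟩
      simp only [d4]
      split_ifs <;> (try simp only [row1, rowE, rowP, rowA, rowC]) <;> (try split_ifs) <;> omega
  by_cases hca : u.val < j+4+a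
  · refine ⟨⟨j+3, by omega⟩, G4_adj a c j u _ (by simp <;> omega) (by simp <;> omega), ?_⟩
    simp only [d4]
    split_ifs <;> (try simp only [row1, rowE, rowP, rowA, rowC]) <;> (try split_ifs) <;> omega
  · refine ⟨⟨1, by omega⟩, G4_adj a c j u _ (by simp <;> omega) (by simp <;> omega), ?_⟩
    simp only [d4]
    split_ifs <;> (try simp only [row1, rowE, rowP, rowA, rowC]) <;> (try split_ifs) <;> omega

def RC4 (j a c : ℕ) : ℕ := ∑ v ∈ range (a+c+j+4), d4 j a (a+c+j+4) v
def RA4 (j a : ℕ) : ℕ := ∑ v ∈ range (a+j+4), d4 j (a+1) (a+j+4) v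
def T4S (a c j : ℕ) : ℕ := ∑ u ∈ range (a+c+j+4), ∑ v ∈ range (a+c+j+4), d4 j a u v

lemma RC4_succ (j a c : ℕ) : RC4 j a (c+1) = RC4 j a c + 2 := by
  unfold RC4
  rw [show a+(c+1)+j+4 = (a+c+j+4)+1 by omega, Finset.sum_range_succ]
  have h1 : ∀ v ∈ range (a+c+j+4), d4 j a ((a+c+j+4)+1) v = d4 j a (a+c+j+4) v := by
    intro v hv; rw [mem_range] at hv
    simp only [d4]
    split_ifs <;> (try simp only [row1, rowE, rowP, rowA, rowC]) <;> (try split_ifs) <;> omega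
  have h2 : d4 j a ((a+c+j+4)+1) (a+c+j+4) = 2 := by
    simp only [d4]
    split_ifs <;> (try simp only [row1, rowE, rowP, rowA, rowC]) <;> (try split_ifs) <;> omega
  rw [Finset.sum_congr rfl h1, h2]

lemma RC4_zero_succ (j a : ℕ) : RC4 j (a+1) 0 = RC4 j a 0 + (j+4) := by
  unfold RC4
  rw [show (a+1)+0+j+4 = (a+0+j+4)+1 by omega, Finset.sum_range_succ]
  have h1 : ∀ v ∈ range (a+0+j+4), d4 j (a+1) ((a+0+j+4)+1) v = d4 j a (a+0+j+4) v := by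
    intro v hv; rw [mem_range] at hv
    simp only [d4]
    split_ifs <;> (try simp only [row1, rowE, rowP, rowA, rowC]) <;> (try split_ifs) <;> omega
  have h2 : d4 j (a+1) ((a+0+j+4)+1) (a+0+j+4) = j+4 := by
    simp only [d4]
    split_ifs <;> (try simp only [row1, rowE, rowP, rowA, rowC]) <;> (try split_ifs) <;> omega
  rw [Finset.sum_congr rfl h1, h2]

lemma RC4_base (j : ℕ) : 2 * RC4 j 0 0 = j^2+7*j+16 := by
  induction j with
  | zero => decide
  | succ j ih =>
    have recur : RC4 (j+1) 0 0 = RC4 j 0 0 + (j+4) := by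
      unfold RC4
      rw [show 0+0+(j+1)+4 = (0+0+j+4)+1 by omega, Finset.sum_range_succ]
      have h1 : ∀ v ∈ range (0+0+j+4), d4 (j+1) 0 ((0+0+j+4)+1) v = d4 j 0 (0+0+j+4) v := by
        intro v hv; rw [mem_range] at hv
        simp only [d4]
        split_ifs <;> (try simp only [row1, rowE, rowP, rowA, rowC]) <;> (try split_ifs) <;> omega
      have h2 : d4 (j+1) 0 ((0+0+j+4)+1) (0+0+j+4) = j+4 := by
        simp only [d4]
        split_ifs <;> (try simp only [row1, rowE, rowP, rowA, rowC]) <;> (try split_ifs) <;> omega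
      rw [Finset.sum_congr rfl h1, h2]
    linarith

lemma RC4_val (j a c : ℕ) : 2 * RC4 j a c = j^2+7*j+16+2*a*j+8*a+4*c := by
  induction c with
  | zero =>
    induction a with
    | zero => simpa using RC4_base j
    | succ a ih => have h := RC4_zero_succ j a; linarith
  | succ c ih => have h := RC4_succ j a c; linarith

lemma RA4_succ (j a : ℕ) : RA4 j (a+1) = RA4 j a + 2 := by
  unfold RA4
  rw [show (a+1)+j+4 = (a+j+4)+1 by omega, Finset.sum_range_succ]
  have h1 : ∀ v ∈ range (a+j+4), d4 j (a+1+1) ((a+j+4)+1) v = d4 j (a+1) (a+j+4) v := by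
    intro v hv; rw [mem_range] at hv
    simp only [d4]
    split_ifs <;> (try simp only [row1, rowE, rowP, rowA, rowC]) <;> (try split_ifs) <;> omega
  have h2 : d4 j (a+1+1) ((a+j+4)+1) (a+j+4) = 2 := by
    simp only [d4]
    split_ifs <;> (try simp only [row1, rowE, rowP, rowA, rowC]) <;> (try split_ifs) <;> omega
  rw [Finset.sum_congr rfl h1, h2]

lemma RA4_base (j : ℕ) : 2 * RA4 j 0 = j^2+9*j+16 := by
  induction j with
  | zero => decide
  | succ j ih =>
    have recur : RA4 (j+1) 0 = RA4 j 0 + (j+5) := by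
      unfold RA4
      rw [show 0+(j+1)+4 = (0+j+4)+1 by omega, Finset.sum_range_succ]
      have h1 : ∀ v ∈ range (0+j+4), d4 (j+1) (0+1) ((0+j+4)+1) v = d4 j (0+1) (0+j+4) v + 1 := by
        intro v hv; rw [mem_range] at hv
        simp only [d4]
        split_ifs <;> (try simp only [row1, rowE, rowP, rowA, rowC]) <;> (try split_ifs) <;> omega
      have h2 : d4 (j+1) (0+1) ((0+j+4)+1) (0+j+4) = 1 := by
        simp only [d4]
        split_ifs <;> (try simp only [row1, rowE, rowP, rowA, rowC]) <;> (try split_ifs) <;> omega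
      rw [Finset.sum_congr rfl h1, Finset.sum_add_distrib, Finset.sum_const, card_range,
        smul_eq_mul, mul_one, h2]
      omega
    linarith

lemma RA4_val (j a : ℕ) : 2 * RA4 j a = j^2+9*j+16+4*a := by
  induction a with
  | zero => simpa using RA4_base j
  | succ a ih => have h := RA4_succ j a; linarith

lemma T4_succ_c (a c j : ℕ) : T4S a (c+1) j = T4S a c j + 2 * RC4 j a c := by
  unfold T4S RC4
  rw [show a+(c+1)+j+4 = (a+c+j+4)+1 by omega, Finset.sum_range_succ]
  have hrow : ∀ u ∈ range (a+c+j+4), ∑ v ∈ range ((a+c+j+4)+1), d4 j a u v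
      = (∑ v ∈ range (a+c+j+4), d4 j a u v) + d4 j a (a+c+j+4) u := by
    intro u hu
    rw [Finset.sum_range_succ, d4_symm j a u (a+c+j+4)]
  have hlast : ∑ v ∈ range ((a+c+j+4)+1), d4 j a (a+c+j+4) v
      = ∑ v ∈ range (a+c+j+4), d4 j a (a+c+j+4) v := by
    rw [Finset.sum_range_succ, d4_self, add_zero]
  rw [Finset.sum_congr rfl hrow, Finset.sum_add_distrib, hlast]
  omega

lemma T4_succ_a (a j : ℕ) : T4S (a+1) 0 j = T4S a 0 j + 2 * RA4 j a := by
  unfold T4S RA4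
  simp only [Nat.add_zero, Nat.zero_add]
  rw [show a+1+j+4 = (a+j+4)+1 by omega, Finset.sum_range_succ]
  have hrow : ∀ u ∈ range (a+j+4), ∑ v ∈ range ((a+j+4)+1), d4 j (a+1) u v
      = (∑ v ∈ range (a+j+4), d4 j a u v) + d4 j (a+1) (a+j+4) u := by
    intro u hu; rw [mem_range] at hu
    rw [Finset.sum_range_succ, d4_symm j (a+1) u (a+j+4)]
    congr 1
    refine Finset.sum_congr rfl (fun v hv => ?_)
    rw [mem_range] at hv
    simp only [d4]
    split_ifs <;> (try simp only [row1, rowE, rowP, rowA, rowC]) <;> (try split_ifs) <;> omega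
  have hlast : ∑ v ∈ range ((a+j+4)+1), d4 j (a+1) (a+j+4) v
      = ∑ v ∈ range (a+j+4), d4 j (a+1) (a+j+4) v := by
    rw [Finset.sum_range_succ, d4_self, add_zero]
  rw [Finset.sum_congr rfl hrow, Finset.sum_add_distrib, hlast]
  omega

lemma T4_zero (j : ℕ) : 3 * T4S 0 0 j = j^3+12*j^2+35*j+48 := by
  induction j with
  | zero => decide
  | succ j ih =>
    have recur : T4S 0 0 (j+1) = T4S 0 0 j + 2 * RA4 j 0 := by
      unfold T4S RA4
      simp only [Nat.add_zero, Nat.zero_add]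
      rw [show j+1+4 = (j+4)+1 by omega, Finset.sum_range_succ]
      have hrow : ∀ u ∈ range (j+4), ∑ v ∈ range ((j+4)+1), d4 (j+1) 0 u v
          = (∑ v ∈ range (j+4), d4 j 0 u v) + d4 j 1 (j+4) u := by
        intro u hu; rw [mem_range] at hu
        rw [Finset.sum_range_succ]
        congr 1
        · refine Finset.sum_congr rfl (fun v hv => ?_)
          rw [mem_range] at hv
          simp only [d4]
          split_ifs <;> (try simp only [row1, rowE, rowP, rowA, rowC]) <;> (try split_ifs) <;> omega
        · simp only [d4]
          split_ifs <;> (try simp only [row1, rowE, rowP, rowA, rowC]) <;> (try split_ifs) <;> omega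
      have hlast : ∑ v ∈ range ((j+4)+1), d4 (j+1) 0 (j+4) v
          = ∑ v ∈ range (j+4), d4 j 1 (j+4) v := by
        rw [Finset.sum_range_succ]
        have h0 : d4 (j+1) 0 (j+4) (j+4) = 0 := d4_self _ _ _
        rw [h0, add_zero]
        refine Finset.sum_congr rfl (fun v hv => ?_)
        rw [mem_range] at hv
        simp only [d4]
        split_ifs <;> (try simp only [row1, rowE, rowP, rowA, rowC]) <;> (try split_ifs) <;> omega
      rw [Finset.sum_congr rfl hrow, Finset.sum_add_distrib, hlast]
      omega
    have hval := RA4_val j 0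
    linarith

lemma T4_a_val (a j : ℕ) : 3 * T4S a 0 j
    = 48+35*j+12*j^2+j^3+42*a+27*a*j+3*a*j^2+6*a^2 := by
  induction a with
  | zero => have := T4_zero j; linarith
  | succ a ih =>
    have h1 := T4_succ_a a j
    have h2 := RA4_val j a
    linarith

lemma T4_val (a c j : ℕ) : 3 * T4S a c j
    = 48+35*j+12*j^2+j^3+42*c+21*c*j+3*c*j^2+6*c^2+42*a+27*a*j+3*a*j^2+24*a*c+6*a*c*j+6*a^2 := by
  induction c with
  | zero => have := T4_a_val a j; linarith
  | succ c ih =>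
    have h1 := T4_succ_c a c j
    have h2 := RC4_val j a c
    linarith

lemma G3_dist (a j : ℕ) (u v : Fin (a+j+3)) :
    (G3Graph a j).dist u v = d3 j u.val v.val :=
  dist_eq_of_aux (G3Graph a j) (fun u v => d3 j u.val v.val)
    (fun u => d3_self j u.val)
    (fun u v h => Fin.ext (d3_pos j _ _ h))
    (fun u x v h => G3_lip a j u x v h)
    (fun u v h => G3_desc a j u v h) u v

lemma G4_dist (a c j : ℕ) (u v : Fin (a+c+j+4)) :
    (G4Graph a c j).dist u v = d4 j a u.val v.val :=
  dist_eq_of_aux (G4Graph a c j) (fun u v => d4 j a u.val v.val)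
    (fun u => d4_self j a u.val)
    (fun u v h => Fin.ext (d4_pos j a _ _ h))
    (fun u x v h => G4_lip a c j u x v h)
    (fun u v h => G4_desc a c j u v h) u v

lemma W3_6 (a j : ℕ) : 6 * wienerIndex (G3Graph a j)
    = 18+20*j+9*j^2+j^3+24*a+21*a*j+3*a*j^2+6*a^2 := by
  have h2 : 2 * wienerIndex (G3Graph a j) = T3S a j :=
    wiener_eq (G3Graph a j) (fun u v => d3 j u v) (G3_dist a j) (d3_symm j) (d3_self j)
  have h3 := T3_val a j
  calc 6 * wienerIndex (G3Graph a j) = 3 * (2 * wienerIndex (G3Graph a j)) := by ring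
    _ = 3 * T3S a j := by rw [h2]
    _ = _ := h3

lemma W4_6 (a c j : ℕ) : 6 * wienerIndex (G4Graph a c j)
    = 48+35*j+12*j^2+j^3+42*c+21*c*j+3*c*j^2+6*c^2+42*a+27*a*j+3*a*j^2+24*a*c+6*a*c*j+6*a^2 := by
  have h2 : 2 * wienerIndex (G4Graph a c j) = T4S a c j :=
    wiener_eq (G4Graph a c j) (fun u v => d4 j a u v) (G4_dist a c j) (d4_symm j a) (d4_self j a)
  have h3 := T4_val a c j
  calc 6 * wienerIndex (G4Graph a c j) = 3 * (2 * wienerIndex (G4Graph a c j)) := by ring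
    _ = 3 * T4S a c j := by rw [h2]
    _ = _ := h3

theorem stmt13 (n m : ℕ) (hm : 2 ≤ m) (hn : 2 * m ≤ n) (heven : Even n)
    (D : ℚ)
    (hD : D = (wienerIndex (G4Graph ((n - 2*m)/2) ((n - 2*m)/2) (2*m - 4)) : ℚ)
        - (wienerIndex (G3Graph (n - 2*m) (2*m - 3)) : ℚ)) :
    D = 4 + (n:ℚ) + 2*(m:ℚ)^3 + (n:ℚ)*(m:ℚ) + (1/2)*(m:ℚ)*(n:ℚ)^2 - (1/2)*(n:ℚ)^2
        - 4*(m:ℚ) - 2*(n:ℚ)*(m:ℚ)^2 ∧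
    (∀ k : ℕ, n = 2*m + k →
      D = 2 + (1/2) * ((k:ℚ)^2 - 2*(k:ℚ) - 4) * ((m:ℚ) - 1)) ∧
    (n - 2*m = 0 ∨ n - 2*m = 2 → D ≤ 0 ∧ (D = 0 ↔ m = 2)) ∧
    (4 ≤ n - 2*m → 0 < D) := by
  obtain ⟨t, ht⟩ : ∃ t, n - 2*m = 2*t := by
    obtain ⟨r, hr⟩ := heven
    exact ⟨(n - 2*m)/2, by omega⟩
  obtain ⟨b, hb⟩ : ∃ b, m = b + 2 := ⟨m - 2, by omega⟩
  subst hb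
  have hn2 : n = 2*b+4+2*t := by omega
  subst hn2
  rw [show (2*b+4+2*t - 2*(b+2))/2 = t by omega, show 2*b+4+2*t - 2*(b+2) = 2*t by omega,
    show 2*(b+2) - 3 = 2*b+1 by omega, show 2*(b+2) - 4 = 2*b by omega] at hD
  have h3 := W3_6 (2*t) (2*b+1)
  have h4 := W4_6 t t (2*b)
  have h3q : (6:ℚ) * (wienerIndex (G3Graph (2*t) (2*b+1)) : ℚ)
      = 18+20*(2*(b:ℚ)+1)+9*(2*(b:ℚ)+1)^2+(2*(b:ℚ)+1)^3+24*(2*(t:ℚ))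
        +21*(2*(t:ℚ))*(2*(b:ℚ)+1)+3*(2*(t:ℚ))*(2*(b:ℚ)+1)^2+6*(2*(t:ℚ))^2 := by
    exact_mod_cast congrArg (fun x : ℕ => (x:ℚ)) h3
  have h4q : (6:ℚ) * (wienerIndex (G4Graph t t (2*b)) : ℚ)
      = 48+35*(2*(b:ℚ))+12*(2*(b:ℚ))^2+(2*(b:ℚ))^3+42*(t:ℚ)+21*(t:ℚ)*(2*(b:ℚ))
        +3*(t:ℚ)*(2*(b:ℚ))^2+6*(t:ℚ)^2+42*(t:ℚ)+27*(t:ℚ)*(2*(b:ℚ))+3*(t:ℚ)*(2*(b:ℚ))^2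
        +24*(t:ℚ)*(t:ℚ)+6*(t:ℚ)*(t:ℚ)*(2*(b:ℚ))+6*(t:ℚ)^2 := by
    exact_mod_cast congrArg (fun x : ℕ => (x:ℚ)) h4
  have hDval : D = 2 + (2*(t:ℚ)^2 - 2*(t:ℚ) - 2)*((b:ℚ)+1) := by
    have h6 : (6:ℚ) * D = 6 * (wienerIndex (G4Graph t t (2*b)) : ℚ)
        - 6 * (wienerIndex (G3Graph (2*t) (2*b+1)) : ℚ) := by rw [hD]; ring
    rw [h3q, h4q] at h6
    linarith
  refine ⟨?_, ?_, ?_, ?_⟩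
  · rw [hDval]; push_cast; ring
  · intro k hk
    have hk2 : k = 2*t := by omega
    subst hk2
    rw [hDval]; push_cast; ring
  · intro hcase
    have ht01 : t = 0 ∨ t = 1 := by omega
    have hDb : D = -2*(b:ℚ) := by
      rcases ht01 with h | h <;> subst h <;> rw [hDval] <;> push_cast <;> ring
    constructor
    · rw [hDb]
      have : (0:ℚ) ≤ (b:ℚ) := Nat.cast_nonneg b
      linarith
    · rw [hDb]
      constructor
      · intro h
        have hb0 : (b:ℚ) = 0 := by linarith
        have : b = 0 := by exact_mod_cast hb0
        omega
      · intro h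
        have : b = 0 := by omega
        subst this
        norm_num
  · intro hge
    have ht2 : 2 ≤ t := by omega
    have ht2q : (2:ℚ) ≤ (t:ℚ) := by exact_mod_cast ht2
    have hb0 : (0:ℚ) ≤ (b:ℚ) := Nat.cast_nonneg b
    have hA : (2:ℚ) ≤ 2*(t:ℚ)^2 - 2*(t:ℚ) - 2 := by nlinarith
    have hprod : (0:ℚ) ≤ (b:ℚ) * (2*(t:ℚ)^2 - 2*(t:ℚ) - 2) :=
      mul_nonneg hb0 (by linarith)
    rw [hDval]
    nlinarith
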